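/- Let M ≺ N be structures with N |M|⁺-saturated, and let p be a complete type over N finitely satisfiable in M. Then for any set of parameters B ⊇ N, p has a unique extension to a complete type over B finitely satisfiable in M. -/

import Mathlib

open FirstOrder FirstOrder.Language

namespace Stmt8Aux

variable {L : Language} {C : Type*} [L.Structure C]

lemma realize_congr_free {α : Type*} [DecidableEq α] {φ : L.Formula α} {v w : α → C}
    (h : ∀ a ∈ φ.freeVarFinset, v a = w a) : φ.Realize v ↔ φ.Realize w := by
  have hsub : ↑φ.freeVarFinset ⊆ (↑φ.freeVarFinset : Set α) := subset_rfl
  show BoundedFormula.Realize φ v default ↔ BoundedFormula.Realize φ w default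
  rw [← BoundedFormula.realize_restrictFreeVar' hsub (v := v) (xs := default),
      ← BoundedFormula.realize_restrictFreeVar' hsub (v := w) (xs := default)]
  have hvw : v ∘ (Subtype.val : (↑φ.freeVarFinset : Set α) → α)
      = w ∘ Subtype.val := by
    funext a
    exact h a (by exact_mod_cast a.2)
  rw [hvw]

/-- Key lemma: any finite tuple from `C` has the same type over `M` as some tuple from `N`. -/
lemma exists_tuple (M N : Set C) (hMN : M ⊆ N)
    (hsat : ∀ A : Set C, A ⊆ N → Cardinal.mk A ≤ Cardinal.mk M →
      ∀ q : Set (L.Formula (↥A ⊕ Fin 1)),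
        (∀ s : Finset (L.Formula (↥A ⊕ Fin 1)), ↑s ⊆ q →
          ∃ c : C, ∀ φ ∈ s, φ.Realize (Sum.elim Subtype.val fun _ => c)) →
        ∃ n ∈ N, ∀ φ ∈ q, φ.Realize (Sum.elim Subtype.val fun _ => n))
    (hdich : M.Infinite ∨ ∀ c : C, c ∈ N) :
    ∀ (k : ℕ) (b : Fin k → C), ∃ n : Fin k → C, (∀ i, n i ∈ N) ∧
      ∀ θ : L.Formula (↥M ⊕ Fin k),
        (θ.Realize (Sum.elim Subtype.val b) ↔ θ.Realize (Sum.elim Subtype.val n)) := by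
  rcases hdich with hinf | hall
  swap
  · exact fun k b => ⟨b, fun i => hall _, fun θ => Iff.rfl⟩
  intro k
  induction k with
  | zero => exact fun b => ⟨b, fun i => i.elim0, fun θ => Iff.rfl⟩
  | succ k ih =>
    intro b
    obtain ⟨n', hn'N, hIH⟩ := ih (fun i => b i.castSucc)
    set b' : Fin k → C := fun i => b i.castSucc with hb'
    set bk : C := b (Fin.last k) with hbk
    set A : Set C := M ∪ Set.range n' with hA
    have hAN : A ⊆ N := Set.union_subset hMN (Set.range_subset_iff.2 hn'N)
    have hcard : Cardinal.mk A ≤ Cardinal.mk M := by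
      haveI : Infinite ↥M := Set.infinite_coe_iff.2 hinf
      have h1 : Cardinal.mk ↥A ≤ Cardinal.mk ↥M + Cardinal.mk ↥(Set.range n') :=
        Cardinal.mk_union_le _ _
      have h2 : Cardinal.mk ↥(Set.range n') ≤ Cardinal.mk ↥M :=
        le_trans (le_of_lt (Set.Finite.lt_aleph0 (Set.finite_range n')))
          (Cardinal.aleph0_le_mk _)
      calc Cardinal.mk ↥A ≤ Cardinal.mk ↥M + Cardinal.mk ↥(Set.range n') := h1
        _ ≤ Cardinal.mk ↥M + Cardinal.mk ↥M := add_le_add_right h2 _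
        _ = Cardinal.mk ↥M := Cardinal.add_eq_self (Cardinal.aleph0_le_mk _)
    classical
    have hidx : ∀ a : ↥A, (a : C) ∉ M → ∃ i, n' i = (a : C) := by
      rintro ⟨a, ha⟩ hnM
      rcases ha with h | h
      · exact absurd h hnM
      · exact h
    let idx : ↥A → ↥M ⊕ Fin k := fun a =>
      if h : (a : C) ∈ M then Sum.inl ⟨a, h⟩ else Sum.inr (hidx a h).choose
    have hidx_spec : ∀ (a : ↥A) (h : (a : C) ∉ M),
        n' (hidx a h).choose = (a : C) := fun a h => (hidx a h).choose_spec
    -- the valuation sending a ∈ A to its "b-version"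
    let vbA : ↥A ⊕ Fin 1 → C :=
      Sum.elim (fun a => Sum.elim Subtype.val b' (idx a)) (fun _ => bk)
    let qt : Set (L.Formula (↥A ⊕ Fin 1)) := {θ | θ.Realize vbA}
    -- relabeling map into the M-world
    let G' : ↥A ⊕ Fin 1 → (↥M ⊕ Fin k) ⊕ Fin 1 :=
      Sum.elim (fun a => Sum.inl (idx a)) (fun _ => Sum.inr 0)
    -- finite satisfiability of qt in C
    have hfs : ∀ s : Finset (L.Formula (↥A ⊕ Fin 1)), ↑s ⊆ qt →
        ∃ c : C, ∀ φ ∈ s, φ.Realize (Sum.elim Subtype.val fun _ => c) := by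
      intro s hs
      let Θ : L.Formula (↥A ⊕ Fin 1) := BoundedFormula.iInf (fun φ : ↥s => (φ : L.Formula (↥A ⊕ Fin 1)))
      let χ : L.Formula (↥M ⊕ Fin k) := (Θ.relabel G').iExs (Fin 1)
      have hΘ : ∀ v : ↥A ⊕ Fin 1 → C, Θ.Realize v ↔ ∀ φ ∈ s, φ.Realize v := by
        intro v
        show BoundedFormula.Realize _ v default ↔ _
        rw [BoundedFormula.realize_iInf]
        exact Subtype.forall
      have hχ : ∀ v : (↥M ⊕ Fin k) → C, χ.Realize v ↔
          ∃ i : Fin 1 → C, Θ.Realize (fun a => Sum.elim v i (G' a)) :=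
        fun v => Formula.realize_iExs.trans (exists_congr fun i => Formula.realize_relabel)
      have hχb : χ.Realize (Sum.elim Subtype.val b') := by
        rw [hχ]
        refine ⟨fun _ => bk, ?_⟩
        have : (fun a => Sum.elim (Sum.elim Subtype.val b') (fun _ => bk) (G' a)) = vbA := by
          funext a
          rcases a with a | j
          · rfl
          · rfl
        rw [this, hΘ]
        exact fun φ hφ => hs hφ
      have hχn : χ.Realize (Sum.elim Subtype.val n') := (hIH χ).1 hχb
      rw [hχ] at hχn
      obtain ⟨i, hi⟩ := hχn
      refine ⟨i 0, ?_⟩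
      have hval : (fun a => Sum.elim (Sum.elim Subtype.val n') i (G' a))
          = (Sum.elim Subtype.val (fun _ => i 0) : ↥A ⊕ Fin 1 → C) := by
        funext a
        rcases a with a | j
        · show Sum.elim Subtype.val n' (idx a) = (a : C)
          by_cases h : (a : C) ∈ M
          · simp [idx, dif_pos h]
          · simp only [idx, dif_neg h, Sum.elim_inr]
            exact hidx_spec a h
        · rfl
      rw [hval, hΘ] at hi
      exact hi
    obtain ⟨nk, hnkN, hnk⟩ := hsat A hAN hcard qt hfs
    refine ⟨Fin.snoc n' nk, ?_, ?_⟩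
    · intro i
      refine Fin.lastCases ?_ ?_ i
      · simpa using hnkN
      · intro j
        simpa using hn'N j
    · -- relabeling from the M-(k+1)-world into the A-world
      intro θM
      let H : ↥M ⊕ Fin (k + 1) → ↥A ⊕ Fin 1 :=
        Sum.elim (fun m => Sum.inl ⟨(m : C), Or.inl m.2⟩)
          (fun i => Fin.lastCases (Sum.inr 0)
            (fun j => Sum.inl ⟨n' j, Or.inr ⟨j, rfl⟩⟩) i)
      have h1 : ∀ ψ : L.Formula (↥M ⊕ Fin (k + 1)),
          (ψ.relabel H).Realize vbA ↔ ψ.Realize (Sum.elim Subtype.val b) := by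
        intro ψ
        rw [Formula.realize_relabel]
        have : vbA ∘ H = (Sum.elim Subtype.val b : ↥M ⊕ Fin (k+1) → C) := by
          funext x
          rcases x with m | i
          · show Sum.elim Subtype.val b' (idx ⟨(m : C), Or.inl m.2⟩) = (m : C)
            simp [idx, dif_pos m.2]
          · induction i using Fin.lastCases with
            | last =>
              show vbA (Fin.lastCases (Sum.inr 0) _ (Fin.last k)) = b (Fin.last k)
              rw [Fin.lastCases_last]
              rfl
            | cast j =>
              show vbA (Fin.lastCases (Sum.inr 0)
                (fun j => Sum.inl ⟨n' j, Or.inr ⟨j, rfl⟩⟩) j.castSucc) = b j.castSucc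
              rw [Fin.lastCases_castSucc]
              show Sum.elim Subtype.val b' (idx ⟨n' j, Or.inr ⟨j, rfl⟩⟩) = b j.castSucc
              by_cases h : n' j ∈ M
              · simp only [idx, dif_pos h, Sum.elim_inl]
                show n' j = b j.castSucc
                -- use hIH with the equality formula x_j = (n' j : M)
                have := (hIH ((Term.var (Sum.inr j)).equal
                  (Term.var (Sum.inl ⟨n' j, h⟩)))).2 (by simp)
                simp only [Formula.realize_equal, Term.realize_var, Sum.elim_inr,
                  Sum.elim_inl] at this
                exact this.symm
              · simp only [idx, dif_neg h, Sum.elim_inr]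
                have hspec := hidx_spec ⟨n' j, Or.inr ⟨j, rfl⟩⟩ h
                show b' _ = b j.castSucc
                have := (hIH ((Term.var (Sum.inr
                    (hidx ⟨n' j, Or.inr ⟨j, rfl⟩⟩ h).choose)).equal
                  (Term.var (Sum.inr j)))).2 (by simp [hspec])
                simpa using this
        rw [this]
      have h2 : ∀ ψ : L.Formula (↥M ⊕ Fin (k + 1)),
          (ψ.relabel H).Realize (Sum.elim Subtype.val fun _ => nk) ↔
            ψ.Realize (Sum.elim Subtype.val (Fin.snoc n' nk)) := by
        intro ψ
        rw [Formula.realize_relabel]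
        have : (Sum.elim Subtype.val fun _ => nk) ∘ H
            = (Sum.elim Subtype.val (Fin.snoc n' nk) : ↥M ⊕ Fin (k+1) → C) := by
          funext x
          rcases x with m | i
          · rfl
          · show (Sum.elim Subtype.val fun _ => nk)
                (Fin.lastCases (Sum.inr 0)
                  (fun j => Sum.inl ⟨n' j, Or.inr ⟨j, rfl⟩⟩) i)
                = Sum.elim Subtype.val (Fin.snoc n' nk) (Sum.inr i)
            rw [Sum.elim_inr]
            induction i using Fin.lastCases with
            | last =>
              rw [Fin.lastCases_last, Fin.snoc_last]
              rfl
            | cast j =>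
              rw [Fin.lastCases_castSucc, Fin.snoc_castSucc]
              rfl
        rw [this]
      constructor
      · intro h
        have : (θM.relabel H) ∈ qt := (h1 θM).2 h
        exact (h2 θM).1 (hnk _ this)
      · intro h
        by_contra hcon
        have hnot : (θM.not).Realize (Sum.elim Subtype.val b) := by
          rw [Formula.realize_not]; exact hcon
        have : ((θM.not).relabel H) ∈ qt := (h1 θM.not).2 hnot
        have := (h2 θM.not).1 (hnk _ this)
        rw [Formula.realize_not] at this
        exact this h


lemma no_conflict (M N B : Set C) (hMN : M ⊆ N) (hNB : N ⊆ B)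
    (htuple : ∀ (k : ℕ) (b : Fin k → C), ∃ n : Fin k → C, (∀ i, n i ∈ N) ∧
      ∀ θ : L.Formula (↥M ⊕ Fin k),
        (θ.Realize (Sum.elim Subtype.val b) ↔ θ.Realize (Sum.elim Subtype.val n)))
    (p : Set (L.Formula (↥N ⊕ Fin 1)))
    (hpc : ∀ φ : L.Formula (↥N ⊕ Fin 1), φ ∈ p ∨ φ.not ∈ p)
    (q1 q2 : Set (L.Formula (↥B ⊕ Fin 1)))
    (h1fs : ∀ s : Finset (L.Formula (↥B ⊕ Fin 1)), ↑s ⊆ q1 →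
      ∃ m ∈ M, ∀ φ ∈ s, φ.Realize (Sum.elim Subtype.val fun _ => m))
    (h2fs : ∀ s : Finset (L.Formula (↥B ⊕ Fin 1)), ↑s ⊆ q2 →
      ∃ m ∈ M, ∀ φ ∈ s, φ.Realize (Sum.elim Subtype.val fun _ => m))
    (h1p : ∀ φ ∈ p, φ.relabel (Sum.map (Set.inclusion hNB) id) ∈ q1)
    (h2p : ∀ φ ∈ p, φ.relabel (Sum.map (Set.inclusion hNB) id) ∈ q2)
    (φ : L.Formula (↥B ⊕ Fin 1)) (hφ1 : φ ∈ q1) (hφ2 : φ.not ∈ q2) : False := by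
  classical
  set t := φ.freeVarFinset with ht
  let tB : Finset ↥B := t.preimage Sum.inl Sum.inl_injective.injOn
  let e : ↥tB ≃ Fin (Fintype.card ↥tB) := Fintype.equivFin ↥tB
  set k := Fintype.card ↥tB with hk
  let bb : Fin k → C := fun i => ((e.symm i : ↥tB) : ↥B)
  obtain ⟨nn, hnnN, hkey⟩ := htuple k bb
  have hbb : ∀ (b : ↥B) (h : Sum.inl b ∈ t),
      bb (e ⟨b, Finset.mem_preimage.2 h⟩) = (b : C) := by
    intro b h
    simp only [bb, Equiv.symm_apply_apply]
  -- the corresponding formula over N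
  let g : ↥B ⊕ Fin 1 → ↥N ⊕ Fin 1 :=
    Sum.elim (fun b => if h : Sum.inl b ∈ t then
      Sum.inl (⟨nn (e ⟨b, Finset.mem_preimage.2 h⟩), hnnN _⟩ : ↥N) else Sum.inr 0)
      (fun _ => Sum.inr 0)
  let ψ : L.Formula (↥N ⊕ Fin 1) := φ.relabel g
  have main : ∀ m : C, m ∈ M →
      (ψ.Realize (Sum.elim Subtype.val fun _ => m) ↔
        φ.Realize (Sum.elim Subtype.val fun _ => m)) := by
    intro m hm
    let ρ : ↥B ⊕ Fin 1 → ↥M ⊕ Fin k :=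
      Sum.elim (fun b => if h : Sum.inl b ∈ t then
        Sum.inr (e ⟨b, Finset.mem_preimage.2 h⟩) else Sum.inl ⟨m, hm⟩)
        (fun _ => Sum.inl ⟨m, hm⟩)
    let θ : L.Formula (↥M ⊕ Fin k) := φ.relabel ρ
    have e1 : φ.Realize (Sum.elim Subtype.val fun _ => m) ↔
        θ.Realize (Sum.elim Subtype.val bb) := by
      rw [Formula.realize_relabel]
      refine realize_congr_free ?_
      intro a ha
      rcases a with b | j
      · rw [Function.comp_apply]
        show (b : C) = Sum.elim Subtype.val bb (ρ (Sum.inl b))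
        simp only [ρ, Sum.elim_inl, dif_pos (show Sum.inl b ∈ t from ha), Sum.elim_inr]
        exact (hbb b ha).symm
      · rw [Function.comp_apply]
        show m = Sum.elim Subtype.val bb (ρ (Sum.inr j))
        rfl
    have e2 : ψ.Realize (Sum.elim Subtype.val fun _ => m) ↔
        θ.Realize (Sum.elim Subtype.val nn) := by
      rw [Formula.realize_relabel, Formula.realize_relabel]
      refine realize_congr_free ?_
      intro a ha
      rcases a with b | j
      · rw [Function.comp_apply, Function.comp_apply]
        show Sum.elim Subtype.val (fun _ => m) (g (Sum.inl b))
          = Sum.elim Subtype.val nn (ρ (Sum.inl b))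
        simp only [g, ρ, Sum.elim_inl, dif_pos (show Sum.inl b ∈ t from ha), Sum.elim_inr]
      · rfl
    exact e2.trans ((hkey θ).symm.trans e1.symm)
  have hcomp : ∀ (χ : L.Formula (↥N ⊕ Fin 1)) (c : C),
      (χ.relabel (Sum.map (Set.inclusion hNB) id)).Realize
        (Sum.elim Subtype.val fun _ => c)
      ↔ χ.Realize (Sum.elim Subtype.val fun _ => c) := by
    intro χ c
    rw [Formula.realize_relabel]
    have : (Sum.elim Subtype.val fun _ => c) ∘ Sum.map (Set.inclusion hNB) id
        = (Sum.elim Subtype.val fun _ => c : ↥N ⊕ Fin 1 → C) := by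
      funext x
      rcases x with n | j <;> rfl
    rw [this]
  rcases hpc ψ with hψ | hψ
  · obtain ⟨m, hm, hreal⟩ := h2fs {ψ.relabel (Sum.map (Set.inclusion hNB) id), φ.not}
      (by
        intro x hx
        rcases Finset.mem_insert.1 hx with rfl | hx
        · exact h2p ψ hψ
        · rw [Finset.mem_singleton.1 hx]; exact hφ2)
    have hr1 := hreal _ (Finset.mem_insert_self _ _)
    have hr2 := hreal φ.not (Finset.mem_insert.2 (Or.inr (Finset.mem_singleton_self _)))
    rw [hcomp] at hr1
    rw [Formula.realize_not] at hr2
    exact hr2 ((main m hm).1 hr1)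
  · obtain ⟨m, hm, hreal⟩ := h1fs {(ψ.not).relabel (Sum.map (Set.inclusion hNB) id), φ}
      (by
        intro x hx
        rcases Finset.mem_insert.1 hx with rfl | hx
        · exact h1p ψ.not hψ
        · rw [Finset.mem_singleton.1 hx]; exact hφ1)
    have hr1 := hreal _ (Finset.mem_insert_self _ _)
    have hr2 := hreal φ (Finset.mem_insert.2 (Or.inr (Finset.mem_singleton_self _)))
    rw [hcomp, Formula.realize_not] at hr1
    exact hr1 ((main m hm).2 hr2)

lemma dich (M N : Set C) (hMN : M ⊆ N)
    (hMelem : ∀ φ : L.Formula (↥M ⊕ Fin 1),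
      (∃ c : C, φ.Realize (Sum.elim Subtype.val fun _ => c)) →
        ∃ m ∈ M, φ.Realize (Sum.elim Subtype.val fun _ => m)) :
    M.Infinite ∨ ∀ c : C, c ∈ N := by
  classical
  by_cases hinf : M.Infinite
  · exact Or.inl hinf
  right
  have hfin : M.Finite := Set.not_infinite.mp hinf
  haveI := hfin.fintype
  intro c
  by_contra hcN
  have hcM : c ∉ M := fun h => hcN (hMN h)
  let Φ : L.Formula (↥M ⊕ Fin 1) := BoundedFormula.iInf
    (fun m : ↥M => ((Term.var (Sum.inr 0) : L.Term (↥M ⊕ Fin 1)).equal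
      (Term.var (Sum.inl m))).not)
  have hΦ : ∀ v : ↥M ⊕ Fin 1 → C,
      Φ.Realize v ↔ ∀ m : ↥M, ¬ (v (Sum.inr 0) = v (Sum.inl m)) := by
    intro v
    show BoundedFormula.Realize _ v default ↔ _
    rw [BoundedFormula.realize_iInf]
    simp [Term.equal, Term.bdEqual, BoundedFormula.Realize, Term.realize]
  obtain ⟨m, hmM, hmreal⟩ := hMelem Φ ⟨c, (hΦ _).2 (by
    intro m
    simp only [Sum.elim_inr, Sum.elim_inl]
    exact fun h => hcM (h ▸ m.2))⟩
  have := ((hΦ _).1 hmreal) ⟨m, hmM⟩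
  simp at this

end Stmt8Aux

open Stmt8Aux in
/-- If `M ≺ N` (both elementary in the ambient structure `C`), `N` is `|M|⁺`-saturated,
and `p` is a complete type over `N` finitely satisfiable in `M`, then for any parameter
set `B ⊇ N` there is a unique extension of `p` to a complete type over `B` finitely
satisfiable in `M`. -/
theorem stmt8 {L : Language} {C : Type*} [L.Structure C]
    (M N B : Set C) (hMN : M ⊆ N) (hNB : N ⊆ B)
    -- M is an elementary subset of C (Tarski–Vaught)
    (hMelem : ∀ φ : L.Formula (↥M ⊕ Fin 1),
      (∃ c : C, φ.Realize (Sum.elim Subtype.val fun _ => c)) →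
        ∃ m ∈ M, φ.Realize (Sum.elim Subtype.val fun _ => m))
    -- N is an elementary subset of C
    (hNelem : ∀ φ : L.Formula (↥N ⊕ Fin 1),
      (∃ c : C, φ.Realize (Sum.elim Subtype.val fun _ => c)) →
        ∃ n ∈ N, φ.Realize (Sum.elim Subtype.val fun _ => n))
    -- N is |M|⁺-saturated: every finitely satisfiable type over a parameter set
    -- of cardinality at most |M| contained in N is realized in N
    (hsat : ∀ A : Set C, A ⊆ N → Cardinal.mk A ≤ Cardinal.mk M →
      ∀ q : Set (L.Formula (↥A ⊕ Fin 1)),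
        (∀ s : Finset (L.Formula (↥A ⊕ Fin 1)), ↑s ⊆ q →
          ∃ c : C, ∀ φ ∈ s, φ.Realize (Sum.elim Subtype.val fun _ => c)) →
        ∃ n ∈ N, ∀ φ ∈ q, φ.Realize (Sum.elim Subtype.val fun _ => n))
    -- p is a complete type over N, finitely satisfiable in M
    (p : Set (L.Formula (↥N ⊕ Fin 1)))
    (hpc : ∀ φ : L.Formula (↥N ⊕ Fin 1), φ ∈ p ∨ φ.not ∈ p)
    (hpfs : ∀ s : Finset (L.Formula (↥N ⊕ Fin 1)), ↑s ⊆ p →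
      ∃ m ∈ M, ∀ φ ∈ s, φ.Realize (Sum.elim Subtype.val fun _ => m)) :
    ∃! q : Set (L.Formula (↥B ⊕ Fin 1)),
      (∀ φ : L.Formula (↥B ⊕ Fin 1), φ ∈ q ∨ φ.not ∈ q) ∧
      (∀ s : Finset (L.Formula (↥B ⊕ Fin 1)), ↑s ⊆ q →
        ∃ m ∈ M, ∀ φ ∈ s, φ.Realize (Sum.elim Subtype.val fun _ => m)) ∧
      (∀ φ ∈ p, φ.relabel (Sum.map (Set.inclusion hNB) id) ∈ q) := by
  classical
  have htuple := exists_tuple M N hMN hsat (dich M N hMN hMelem)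
  -- existence: take an ultrafilter extension
  let J : ↥N ⊕ Fin 1 → ↥B ⊕ Fin 1 := Sum.map (Set.inclusion hNB) id
  let F : L.Formula (↥B ⊕ Fin 1) → Set ↥M :=
    fun φ => {m | φ.Realize (Sum.elim Subtype.val fun _ => (m : C))}
  have hcompJ : ∀ (χ : L.Formula (↥N ⊕ Fin 1)) (c : C),
      ((χ.relabel J).Realize (Sum.elim Subtype.val fun _ => c)
        ↔ χ.Realize (Sum.elim Subtype.val fun _ => c)) := by
    intro χ c
    rw [Formula.realize_relabel]
    have : (Sum.elim Subtype.val fun _ => c) ∘ J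
        = (Sum.elim Subtype.val fun _ => c : ↥N ⊕ Fin 1 → C) := by
      funext x
      rcases x with n | j <;> rfl
    rw [this]
  let T : Set (Set ↥M) := (fun χ : L.Formula (↥N ⊕ Fin 1) => F (χ.relabel J)) '' p
  have hTne : Filter.NeBot (Filter.generate T) := by
    rw [Filter.generate_neBot_iff]
    intro t hts htfin
    haveI := htfin.fintype
    choose χ hχp hχeq using fun s : ↥t => hts s.2
    obtain ⟨m, hmM, hreal⟩ := hpfs (Finset.univ.image χ) (by
      intro x hx
      simp only [Finset.coe_image, Finset.coe_univ, Set.image_univ, Set.mem_range] at hx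
      obtain ⟨s, rfl⟩ := hx
      exact hχp s)
    refine ⟨⟨m, hmM⟩, ?_⟩
    intro s hst
    have h2 : F ((χ ⟨s, hst⟩).relabel J) = s := hχeq ⟨s, hst⟩
    rw [← h2]
    show ((χ ⟨s, hst⟩).relabel J).Realize (Sum.elim Subtype.val fun _ => (m : C))
    rw [hcompJ]
    exact hreal _ (Finset.mem_image_of_mem χ (Finset.mem_univ (⟨s, hst⟩ : ↥t)))
  let U : Ultrafilter ↥M := @Ultrafilter.of _ (Filter.generate T) hTne
  have hUT : ∀ s ∈ T, s ∈ U := fun s hs =>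
    Filter.le_def.mp (@Ultrafilter.of_le _ (Filter.generate T) hTne) s
      (Filter.mem_generate_of_mem hs)
  set q : Set (L.Formula (↥B ⊕ Fin 1)) := {φ | F φ ∈ U} with hqdef
  have hq1 : ∀ φ : L.Formula (↥B ⊕ Fin 1), φ ∈ q ∨ φ.not ∈ q := by
    intro φ
    rcases U.mem_or_compl_mem (F φ) with h | h
    · exact Or.inl h
    · right
      show F φ.not ∈ U
      have : F φ.not = (F φ)ᶜ := by
        ext m
        simp only [F, Set.mem_setOf_eq, Set.mem_compl_iff, Formula.realize_not]
      rw [this]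
      exact h
  have hq2 : ∀ s : Finset (L.Formula (↥B ⊕ Fin 1)), ↑s ⊆ q →
      ∃ m ∈ M, ∀ φ ∈ s, φ.Realize (Sum.elim Subtype.val fun _ => m) := by
    intro s hs
    have hmem : (⋂ φ ∈ s, F φ) ∈ U := (Filter.biInter_finset_mem s).2 (fun φ hφ => hs hφ)
    obtain ⟨m, hm⟩ := Ultrafilter.nonempty_of_mem hmem
    exact ⟨m, m.2, fun φ hφ => Set.mem_iInter₂.1 hm φ hφ⟩
  have hq3 : ∀ φ ∈ p, φ.relabel (Sum.map (Set.inclusion hNB) id) ∈ q := by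
    intro χ hχ
    exact hUT _ ⟨χ, hχ, rfl⟩
  refine ⟨q, ⟨hq1, hq2, hq3⟩, ?_⟩
  rintro q' ⟨h1c, h1fs, h1p⟩
  apply Set.Subset.antisymm
  · intro φ hφ
    by_contra hneg
    rcases hq1 φ with h | h
    · exact hneg h
    · exact no_conflict M N B hMN hNB htuple p hpc q' q h1fs hq2 h1p hq3 φ hφ h
  · intro φ hφ
    by_contra hneg
    rcases h1c φ with h | h
    · exact hneg h
    · exact no_conflict M N B hMN hNB htuple p hpc q q' hq2 h1fs hq3 h1p φ hφ h
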